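/- Let Λ(λ₁, λ₂) = log(½ e^{2αλ₁} + ½ e^{2βλ₂}) with α, β > 0. For x₁ ∈ (0, α), x₂ ∈ (0, β) satisfying βx₁ + αx₂ = αβ, the supremum defining Λ*(x₁,x₂) is attained at λ₁* = (1/(2α)) log(βx₁), λ₂* = (1/(2β)) log(αx₂), and Λ*(x₁,x₂) = (x₁/α) log(βx₁) + (x₂/β) log(αx₂) − log(αβ/2). -/

import Mathlib

/-- On the line `βx₁ + αx₂ = αβ` with `x₁ ∈ (0,α)`, `x₂ ∈ (0,β)`, the supremum
defining `Λ*(x₁,x₂)` is attained at `λ₁* = log(βx₁)/(2α)`, `λ₂* = log(αx₂)/(2β)`,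
with value `(x₁/α)log(βx₁) + (x₂/β)log(αx₂) − log(αβ/2)`. -/
theorem legendre_on_line (α β x₁ x₂ : ℝ) (hα : 0 < α) (hβ : 0 < β)
    (hx₁ : x₁ ∈ Set.Ioo 0 α) (hx₂ : x₂ ∈ Set.Ioo 0 β)
    (hline : β * x₁ + α * x₂ = α * β) :
    (∀ p : ℝ × ℝ,
      2 * p.1 * x₁ + 2 * p.2 * x₂ -
        Real.log ((1/2) * Real.exp (2 * α * p.1) + (1/2) * Real.exp (2 * β * p.2)) ≤
      2 * (Real.log (β * x₁) / (2 * α)) * x₁ + 2 * (Real.log (α * x₂) / (2 * β)) * x₂ -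
        Real.log ((1/2) * Real.exp (2 * α * (Real.log (β * x₁) / (2 * α))) +
          (1/2) * Real.exp (2 * β * (Real.log (α * x₂) / (2 * β))))) ∧
    (2 * (Real.log (β * x₁) / (2 * α)) * x₁ + 2 * (Real.log (α * x₂) / (2 * β)) * x₂ -
        Real.log ((1/2) * Real.exp (2 * α * (Real.log (β * x₁) / (2 * α))) +
          (1/2) * Real.exp (2 * β * (Real.log (α * x₂) / (2 * β)))) =
      (x₁ / α) * Real.log (β * x₁) + (x₂ / β) * Real.log (α * x₂) -
        Real.log (α * β / 2)) := by
  obtain ⟨hx₁0, hx₁α⟩ := hx₁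
  obtain ⟨hx₂0, hx₂β⟩ := hx₂
  have hp : (0:ℝ) < x₁ / α := div_pos hx₁0 hα
  have hq : (0:ℝ) < x₂ / β := div_pos hx₂0 hβ
  have hpq : x₁ / α + x₂ / β = 1 := by
    field_simp
    nlinarith [hline]
  have hbx : 0 < β * x₁ := by positivity
  have hax : 0 < α * x₂ := by positivity
  -- simplify the exponentials at the critical point
  have e1 : 2 * α * (Real.log (β * x₁) / (2 * α)) = Real.log (β * x₁) := by
    field_simp
  have e2 : 2 * β * (Real.log (α * x₂) / (2 * β)) = Real.log (α * x₂) := by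
    field_simp
  have hsum : (1/2) * Real.exp (2 * α * (Real.log (β * x₁) / (2 * α))) +
      (1/2) * Real.exp (2 * β * (Real.log (α * x₂) / (2 * β))) = α * β / 2 := by
    rw [e1, e2, Real.exp_log hbx, Real.exp_log hax]
    linarith
  have hsimp : 2 * (Real.log (β * x₁) / (2 * α)) * x₁ + 2 * (Real.log (α * x₂) / (2 * β)) * x₂ -
      Real.log ((1/2) * Real.exp (2 * α * (Real.log (β * x₁) / (2 * α))) +
        (1/2) * Real.exp (2 * β * (Real.log (α * x₂) / (2 * β)))) =
      (x₁ / α) * Real.log (β * x₁) + (x₂ / β) * Real.log (α * x₂) - Real.log (α * β / 2) := by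
    rw [hsum]
    field_simp
  refine ⟨?_, hsimp⟩
  intro pr
  rw [hsimp]
  -- abbreviations
  set p := x₁ / α with hp_def
  set q := x₂ / β with hq_def
  have hbxp : β * x₁ = α * β * p := by
    rw [hp_def]; field_simp [hα.ne']
  have haxq : α * x₂ = α * β * q := by
    rw [hq_def]; field_simp [hβ.ne']
  -- rewrite target value as p log(2p) + q log(2q)
  have hval : p * Real.log (β * x₁) + q * Real.log (α * x₂) - Real.log (α * β / 2) =
      p * Real.log (2 * p) + q * Real.log (2 * q) := by
    rw [hbxp, haxq,
      Real.log_mul (by positivity) (ne_of_gt hp),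
      Real.log_mul (by positivity) (ne_of_gt hq),
      Real.log_mul (by norm_num) (ne_of_gt hp),
      Real.log_mul (by norm_num) (ne_of_gt hq)]
    have hld : Real.log (α * β / 2) = Real.log (α * β) - Real.log 2 :=
      Real.log_div (by positivity) (by norm_num)
    rw [hld]
    linear_combination (Real.log (α * β) - Real.log 2) * hpq
  rw [hval]
  -- main inequality via weighted AM-GM
  set u := 2 * α * pr.1 with hu
  set v := 2 * β * pr.2 with hv
  have hlhs1 : 2 * pr.1 * x₁ = p * u := by
    rw [hu, hp_def]; field_simp
  have hlhs2 : 2 * pr.2 * x₂ = q * v := by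
    rw [hv, hq_def]; field_simp
  rw [hlhs1, hlhs2]
  have h1 : (Real.exp u / (2*p)) ^ p * (Real.exp v / (2*q)) ^ q
      ≤ p * (Real.exp u / (2*p)) + q * (Real.exp v / (2*q)) :=
    Real.geom_mean_le_arith_mean2_weighted hp.le hq.le (by positivity) (by positivity) hpq
  have h2 : p * (Real.exp u / (2*p)) + q * (Real.exp v / (2*q)) =
      (1/2) * Real.exp u + (1/2) * Real.exp v := by
    field_simp
  rw [h2] at h1
  have h3 : Real.log ((Real.exp u / (2*p)) ^ p * (Real.exp v / (2*q)) ^ q)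
      ≤ Real.log ((1/2) * Real.exp u + (1/2) * Real.exp v) :=
    Real.log_le_log (by positivity) h1
  rw [Real.log_mul (by positivity) (by positivity),
    Real.log_rpow (by positivity), Real.log_rpow (by positivity),
    Real.log_div (Real.exp_ne_zero u) (by positivity),
    Real.log_div (Real.exp_ne_zero v) (by positivity),
    Real.log_exp, Real.log_exp] at h3
  nlinarith [h3]
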